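/- An operator A on L²(ℝ) lies in Alg(N_v) ∩ Alg(N_v)* (the diagonal of the Volterra nest algebra) if and only if A = M_φ for some φ ∈ L^∞(ℝ). -/

import Mathlib

open MeasureTheory Complex Filter Set
open scoped ENNReal

noncomputable section

abbrev L2 : Type := Lp ℂ 2 (volume : Measure ℝ)

/-- Member `L²([t,∞))` of the Volterra nest. -/
def Nv (t : ℝ) : Set L2 := {f : L2 | ∀ᵐ x : ℝ ∂volume, x < t → f x = 0}

namespace Volterra

open ContinuousLinearMap


lemma ae_zero_of_integral_Ico_real {v : ℝ → ℝ} (hv : Integrable v volume)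
    (h : ∀ a b : ℝ, a < b → ∫ x in Ico a b, v x = 0) : v =ᵐ[volume] 0 := by
  have hvm : AEMeasurable v volume := hv.aemeasurable
  set fp : ℝ → ℝ≥0∞ := fun x => ENNReal.ofReal (v x) with hfp
  set fm : ℝ → ℝ≥0∞ := fun x => ENNReal.ofReal (-v x) with hfm
  have hfpm : AEMeasurable fp volume := ENNReal.measurable_ofReal.comp_aemeasurable hvm
  have hfmm : AEMeasurable fm volume := ENNReal.measurable_ofReal.comp_aemeasurable hvm.neg
  have hle : ∀ x, fp x ≤ ‖v x‖₊ := fun x => by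
    simp only [hfp, ← enorm_eq_nnnorm, ← ofReal_norm]
    exact ENNReal.ofReal_le_ofReal (le_abs_self _)
  have hle' : ∀ x, fm x ≤ ‖v x‖₊ := fun x => by
    simp only [hfm, ← enorm_eq_nnnorm, ← ofReal_norm]
    exact ENNReal.ofReal_le_ofReal (neg_le_abs _)
  have hfin : ∫⁻ x, fp x ∂volume ≠ ⊤ :=
    ((lintegral_mono hle).trans_lt hv.2).ne
  have hfin' : ∫⁻ x, fm x ∂volume ≠ ⊤ :=
    ((lintegral_mono hle').trans_lt hv.2).ne
  set μp := volume.withDensity fp with hμp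
  set μm := volume.withDensity fm with hμm
  have : IsFiniteMeasure μp := isFiniteMeasure_withDensity hfin
  have : IsFiniteMeasure μm := isFiniteMeasure_withDensity hfin'
  -- integrals over Ico agree
  have key : ∀ E : Set ℝ, MeasurableSet E → IntegrableOn v E volume →
      (∫ x in E, v x = 0 ↔ μp E = μm E) := by
    intro E hE hint
    rw [hμp, hμm, withDensity_apply _ hE, withDensity_apply _ hE]
    rw [integral_eq_lintegral_pos_part_sub_lintegral_neg_part hint]
    constructor
    · intro h0
      have h1 : (∫⁻ x in E, fp x ∂volume) ≠ ⊤ :=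
        ((setLIntegral_le_lintegral _ _).trans_lt (lt_of_le_of_ne le_top hfin)).ne
      have h2 : (∫⁻ x in E, fm x ∂volume) ≠ ⊤ :=
        ((setLIntegral_le_lintegral _ _).trans_lt (lt_of_le_of_ne le_top hfin')).ne
      have := sub_eq_zero.mp h0
      exact (ENNReal.toReal_eq_toReal_iff' h1 h2).mp this
    · intro h0
      rw [h0]; ring
  have huniv : ∫ x, v x ∂volume = 0 := by
    have hmono : Monotone (fun n : ℕ => Ico (-(n:ℝ)) n) := by
      intro m n hmn x hx
      exact ⟨le_trans (by simpa using (Nat.cast_le (α := ℝ)).mpr hmn) hx.1, lt_of_lt_of_le hx.2 (Nat.cast_le.mpr hmn)⟩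
    have hunion : ⋃ n : ℕ, Ico (-(n:ℝ)) n = univ := by
      ext x
      simp only [mem_iUnion, mem_Ico, mem_univ, iff_true]
      obtain ⟨n, hn⟩ := exists_nat_gt |x|
      exact ⟨n, neg_lt_of_neg_lt (lt_of_le_of_lt (neg_le_abs x) hn) |>.le, lt_of_le_of_lt (le_abs_self x) hn⟩
    have ht := MeasureTheory.tendsto_setIntegral_of_monotone
      (fun n => measurableSet_Ico) hmono (by rw [hunion]; exact integrableOn_univ.mpr hv)
    rw [hunion] at ht
    have ht2 : Tendsto (fun n : ℕ => ∫ x in Ico (-(n:ℝ)) n, v x) atTop (nhds 0) := by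
      apply Tendsto.congr' _ tendsto_const_nhds
      filter_upwards [eventually_gt_atTop 0] with n hn
      exact (h _ _ (neg_lt_self (by exact_mod_cast hn))).symm
    rw [setIntegral_univ] at ht
    exact tendsto_nhds_unique ht ht2
  have hμeq : μp = μm := by
    apply MeasureTheory.Measure.ext_of_Ico_finite μp μm
    · rw [← (key univ MeasurableSet.univ (integrableOn_univ.mpr hv))]
      simpa using huniv
    · intro a b hab
      rw [← key _ measurableSet_Ico (hv.integrableOn)]
      exact h a b hab
  have := (withDensity_eq_iff_of_sigmaFinite hfpm hfmm).mp hμeq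
  filter_upwards [this] with x hx
  simp only [Pi.zero_apply]
  simp only [hfp, hfm] at hx
  by_contra hne
  rcases lt_or_gt_of_ne hne with hlt | hgt
  · rw [ENNReal.ofReal_eq_zero.mpr (le_of_lt hlt)] at hx
    exact absurd (ENNReal.ofReal_eq_zero.mp hx.symm) (by simpa using hlt)
  · rw [ENNReal.ofReal_eq_zero.mpr (by linarith : -v x ≤ 0)] at hx
    exact absurd (ENNReal.ofReal_eq_zero.mp hx) (by simpa using hgt)

lemma ae_zero_of_integral_Ico {w : ℝ → ℂ} (hw : Integrable w volume)
    (h : ∀ a b : ℝ, a < b → ∫ x in Ico a b, w x = 0) : w =ᵐ[volume] 0 := by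
  have hre : (fun x => (w x).re) =ᵐ[volume] 0 := by
    apply ae_zero_of_integral_Ico_real hw.re
    intro a b hab
    rw [integral_re hw.integrableOn, h a b hab]
    simp
  have him : (fun x => (w x).im) =ᵐ[volume] 0 := by
    apply ae_zero_of_integral_Ico_real hw.im
    intro a b hab
    rw [integral_im hw.integrableOn, h a b hab]
    simp
  filter_upwards [hre, him] with x h1 h2
  simp only [Pi.zero_apply] at h1 h2 ⊢
  exact Complex.ext h1 h2

def G : ℝ → ℂ := fun x => (Real.exp (-x^2) : ℂ)

lemma G_ne_zero (x : ℝ) : G x ≠ 0 := by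
  simp [G, Real.exp_ne_zero]

lemma G_cont : Continuous G := by
  unfold G; continuity

lemma G_memLp : MemLp G 2 (volume : Measure ℝ) := by
  rw [memLp_two_iff_integrable_sq_norm (G_cont.aestronglyMeasurable)]
  have : (fun x : ℝ => ‖G x‖^2) = fun x : ℝ => Real.exp (-2 * x^2) := by
    ext x
    simp only [G, Complex.norm_real, Real.norm_eq_abs, abs_of_pos (Real.exp_pos _), sq,
      ← Real.exp_add]
    ring_nf
  rw [this]
  exact integrable_exp_neg_mul_sq (by norm_num)

lemma G_conj (x : ℝ) : (starRingEnd ℂ) (G x) = G x :=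
  Complex.conj_ofReal _

/-- Multiplication by the indicator of a measurable set, as a map on L². -/
def cut (E : Set ℝ) (hE : MeasurableSet E) (f : L2) : L2 :=
  MemLp.toLp (E.indicator ⇑f) ((Lp.memLp f).indicator hE)

lemma cut_coe (E : Set ℝ) (hE : MeasurableSet E) (f : L2) :
    ⇑(cut E hE f) =ᵐ[volume] E.indicator ⇑f :=
  MemLp.coeFn_toLp _

lemma cut_add (E : Set ℝ) (hE : MeasurableSet E) (f g : L2) :
    cut E hE (f + g) = cut E hE f + cut E hE g := by
  apply Lp.ext
  filter_upwards [cut_coe E hE (f+g), cut_coe E hE f, cut_coe E hE g,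
    Lp.coeFn_add f g, Lp.coeFn_add (cut E hE f) (cut E hE g)] with x h1 h2 h3 h4 h5
  rw [h1, h5]
  simp only [Pi.add_apply, h2, h3]
  by_cases hx : x ∈ E
  · rw [indicator_of_mem hx, indicator_of_mem hx, indicator_of_mem hx, h4]
    rfl
  · simp [indicator_of_notMem hx]

lemma cut_smul (E : Set ℝ) (hE : MeasurableSet E) (c : ℂ) (f : L2) :
    cut E hE (c • f) = c • cut E hE f := by
  apply Lp.ext
  filter_upwards [cut_coe E hE (c • f), cut_coe E hE f,
    Lp.coeFn_smul c f, Lp.coeFn_smul c (cut E hE f)] with x h1 h2 h3 h4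
  rw [h1, h4]
  simp only [Pi.smul_apply, h2]
  by_cases hx : x ∈ E
  · rw [indicator_of_mem hx, indicator_of_mem hx, h3]; rfl
  · simp [indicator_of_notMem hx]

lemma mem_Nv_iff_cut_eq {t : ℝ} {f : L2} : f ∈ Nv t ↔ cut (Ici t) measurableSet_Ici f = f := by
  constructor
  · intro hf
    apply Lp.ext
    filter_upwards [cut_coe (Ici t) measurableSet_Ici f, hf] with x h1 h2
    rw [h1]
    by_cases hx : x ∈ Ici t
    · rw [indicator_of_mem hx]
    · rw [indicator_of_notMem hx, h2 (lt_of_not_ge hx)]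
  · intro hf
    have := cut_coe (Ici t) measurableSet_Ici f
    rw [hf] at this
    filter_upwards [this] with x h1 hx
    rw [h1, indicator_of_notMem (by simpa using hx)]

lemma cut_mem_Nv (t : ℝ) (f : L2) : cut (Ici t) measurableSet_Ici f ∈ Nv t := by
  filter_upwards [cut_coe (Ici t) measurableSet_Ici f] with x h1 hx
  rw [h1, indicator_of_notMem (by simpa using hx)]

local notation "⟪" x ", " y "⟫" => @inner ℂ _ _ x y

lemma cut_eq_zero_of_inner {E : Set ℝ} {hE : MeasurableSet E} {u : L2}
    (h : ⟪u, cut E hE u⟫ = 0) : cut E hE u = 0 := by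
  have key : ⟪cut E hE u, cut E hE u⟫ = ⟪u, cut E hE u⟫ := by
    rw [MeasureTheory.L2.inner_def, MeasureTheory.L2.inner_def]
    apply integral_congr_ae
    filter_upwards [cut_coe E hE u] with x h1
    simp only [RCLike.inner_apply, h1]
    by_cases hx : x ∈ E
    · rw [indicator_of_mem hx]
    · rw [indicator_of_notMem hx, zero_mul, zero_mul]
  exact inner_self_eq_zero.mp (key.trans h)

lemma inner_eq_zero_of_supports {t : ℝ} {w u : L2}
    (hw : ∀ᵐ x : ℝ ∂volume, t ≤ x → w x = 0) (hu : u ∈ Nv t) : ⟪w, u⟫ = 0 := by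
  rw [MeasureTheory.L2.inner_def, ← integral_zero ℝ ℂ]
  apply integral_congr_ae
  filter_upwards [hw, hu] with x h1 h2
  simp only [RCLike.inner_apply]
  rcases lt_or_ge x t with hx | hx
  · rw [h2 hx, zero_mul]
  · rw [h1 hx, map_zero, mul_zero]

lemma sub_cut_supported (t : ℝ) (f : L2) :
    ∀ᵐ x : ℝ ∂volume, t ≤ x → (f - cut (Ici t) measurableSet_Ici f) x = 0 := by
  filter_upwards [Lp.coeFn_sub f (cut (Ici t) measurableSet_Ici f),
    cut_coe (Ici t) measurableSet_Ici f] with x h1 h2 hx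
  rw [h1, Pi.sub_apply, h2, indicator_of_mem (by exact hx), sub_self]

lemma commutes (A : L2 →L[ℂ] L2)
    (H : ∀ t : ℝ, (∀ f ∈ Nv t, A f ∈ Nv t) ∧
      (∀ f ∈ Nv t, (ContinuousLinearMap.adjoint A) f ∈ Nv t))
    (t : ℝ) (f : L2) :
    A (cut (Ici t) measurableSet_Ici f) = cut (Ici t) measurableSet_Ici (A f) := by
  set P := cut (Ici t) measurableSet_Ici with hP
  set u := P f with hu
  set q := f - u with hq
  have hfu : f = u + q := by rw [hq]; abel
  have hAq : P (A q) = 0 := by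
    apply cut_eq_zero_of_inner
    have h1 : ⟪A q, P (A q)⟫ = ⟪q, (adjoint A) (P (A q))⟫ :=
      (adjoint_inner_right A q (P (A q))).symm
    rw [h1]
    exact inner_eq_zero_of_supports (sub_cut_supported t f)
      ((H t).2 _ (cut_mem_Nv t (A q)))
  have hAu : P (A u) = A u := mem_Nv_iff_cut_eq.mp ((H t).1 u (cut_mem_Nv t f))
  calc A u = P (A u) + P (A q) := by rw [hAu, hAq, add_zero]
    _ = P (A u + A q) := (cut_add _ _ _ _).symm
    _ = P (A f) := by rw [← map_add, ← hfu]

lemma cut_Ico_eq (s t : ℝ) (hst : s ≤ t) (f : L2) :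
    cut (Ico s t) measurableSet_Ico f
      = cut (Ici s) measurableSet_Ici f - cut (Ici t) measurableSet_Ici f := by
  apply Lp.ext (μ := (volume : Measure ℝ))
  filter_upwards [cut_coe (Ico s t) measurableSet_Ico f, cut_coe (Ici s) measurableSet_Ici f,
    cut_coe (Ici t) measurableSet_Ici f,
    Lp.coeFn_sub (cut (Ici s) measurableSet_Ici f) (cut (Ici t) measurableSet_Ici f)]
    with x h1 h2 h3 h4
  rw [h1, h4, Pi.sub_apply, h2, h3]
  simp only [indicator_apply, mem_Ico, mem_Ici]
  rcases le_or_gt s x with hs | hs <;> rcases lt_or_ge x t with ht | ht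
  · rw [if_pos ⟨hs, ht⟩, if_pos hs, if_neg (not_le.mpr ht), sub_zero]
  · rw [if_neg (fun hc => absurd hc.2 (not_lt.mpr ht)), if_pos hs, if_pos ht, sub_self]
  · rw [if_neg (fun hc => absurd hc.1 (not_le.mpr hs)), if_neg (not_le.mpr hs),
      if_neg (not_le.mpr ht), sub_zero]
  · linarith

lemma commutes_Ico (A : L2 →L[ℂ] L2)
    (H : ∀ t : ℝ, (∀ f ∈ Nv t, A f ∈ Nv t) ∧
      (∀ f ∈ Nv t, (ContinuousLinearMap.adjoint A) f ∈ Nv t))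
    (s t : ℝ) (hst : s ≤ t) (f : L2) :
    A (cut (Ico s t) measurableSet_Ico f) = cut (Ico s t) measurableSet_Ico (A f) := by
  rw [cut_Ico_eq s t hst, cut_Ico_eq s t hst, map_sub, commutes A H, commutes A H]

def g : L2 := G_memLp.toLp G

lemma g_coe : ⇑g =ᵐ[volume] G := MemLp.coeFn_toLp _


/-- The span of the truncated Gaussians is dense. -/
lemma orth_eq_zero (h : L2)
    (horth : ∀ s t : ℝ, s < t → ⟪cut (Ico s t) measurableSet_Ico g, h⟫ = 0) : h = 0 := by
  set w : ℝ → ℂ := fun x => G x * h x with hw_def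
  have hw : Integrable w volume := by
    apply (MeasureTheory.L2.integrable_inner (𝕜 := ℂ) g h).congr
    filter_upwards [g_coe] with x hx
    simp only [RCLike.inner_apply, hx, hw_def, G_conj]
    ring
  have hzero : ∀ a b : ℝ, a < b → ∫ x in Ico a b, w x = 0 := by
    intro a b hab
    have h1 := horth a b hab
    rw [MeasureTheory.L2.inner_def] at h1
    rw [← h1, ← integral_indicator measurableSet_Ico]
    apply integral_congr_ae
    filter_upwards [cut_coe (Ico a b) measurableSet_Ico g, g_coe] with x h2 h3
    simp only [RCLike.inner_apply, h2]
    by_cases hx : x ∈ Ico a b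
    · rw [indicator_of_mem hx, indicator_of_mem hx, h3, hw_def, G_conj]
      exact mul_comm _ _
    · rw [indicator_of_notMem hx, indicator_of_notMem hx, map_zero, mul_zero]
  have hae := ae_zero_of_integral_Ico hw hzero
  apply Lp.ext (μ := (volume : Measure ℝ))
  have : ⇑h =ᵐ[volume] 0 := by
    filter_upwards [hae] with x hx
    simp only [hw_def, Pi.zero_apply] at hx ⊢
    exact (mul_eq_zero.mp hx).resolve_left (G_ne_zero x)
  exact this.trans (Lp.coeFn_zero ℂ 2 volume).symm

lemma dense_gens (f : L2) :
    ∃ u : ℕ → L2,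
      (∀ n, u n ∈ Submodule.span ℂ {v : L2 | ∃ s t : ℝ, s < t ∧ v = cut (Ico s t) measurableSet_Ico g}) ∧
      Tendsto u atTop (nhds f) := by
  set V := Submodule.span ℂ {v : L2 | ∃ s t : ℝ, s < t ∧ v = cut (Ico s t) measurableSet_Ico g}
  have hV : V.topologicalClosure = ⊤ := by
    rw [Submodule.topologicalClosure_eq_top_iff]
    rw [Submodule.eq_bot_iff]
    intro h hh
    apply orth_eq_zero
    intro s t hst
    exact (Submodule.mem_orthogonal V h).mp hh _
      (Submodule.subset_span ⟨s, t, hst, rfl⟩)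
  have hf : f ∈ closure (V : Set L2) := by
    have : f ∈ V.topologicalClosure := hV ▸ Submodule.mem_top
    exact this
  obtain ⟨u, hu1, hu2⟩ := mem_closure_iff_seq_limit.mp hf
  exact ⟨u, hu1, hu2⟩

variable (A : L2 →L[ℂ] L2)

/-- inverse of the Gaussian, continuous. -/
def Ginv : ℝ → ℂ := fun x => ((Real.exp (-x^2))⁻¹ : ℝ)

lemma Ginv_cont : Continuous Ginv := by
  apply Continuous.comp Complex.continuous_ofReal
  exact ((Real.continuous_exp.comp (by continuity)).inv₀ (fun x => Real.exp_ne_zero _))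

lemma G_mul_Ginv (x : ℝ) : Ginv x * G x = 1 := by
  simp only [Ginv, G, ← Complex.ofReal_mul]
  rw [inv_mul_cancel₀ (Real.exp_ne_zero _)]
  simp

/-- The symbol of the multiplication operator. -/
def phi : ℝ → ℂ :=
  (((Lp.aestronglyMeasurable (A g)).mul (Ginv_cont.aestronglyMeasurable))).mk _

lemma phi_sm : StronglyMeasurable (phi A) :=
  AEStronglyMeasurable.stronglyMeasurable_mk _

lemma phi_spec : (fun x => phi A x * G x) =ᵐ[volume] ⇑(A g) := by
  filter_upwards [((Lp.aestronglyMeasurable (A g)).mul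
    (Ginv_cont.aestronglyMeasurable)).ae_eq_mk] with x hx
  rw [show phi A x = (A g) x * Ginv x from hx.symm, mul_assoc, G_mul_Ginv, mul_one]

/-- The set of `u` where `A` acts as multiplication by `phi`. -/
def S : Submodule ℂ L2 where
  carrier := {u : L2 | ⇑(A u) =ᵐ[volume] fun x => phi A x * u x}
  add_mem' := by
    intro u v hu hv
    simp only [Set.mem_setOf_eq, map_add] at *
    filter_upwards [hu, hv, Lp.coeFn_add u v, Lp.coeFn_add (A u) (A v)] with x h1 h2 h3 h4
    rw [h4, Pi.add_apply, h1, h2, h3, Pi.add_apply, mul_add]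
  zero_mem' := by
    simp only [Set.mem_setOf_eq, map_zero]
    filter_upwards [Lp.coeFn_zero ℂ 2 (volume : Measure ℝ)] with x hx
    rw [hx]
    simp
  smul_mem' := by
    intro c u hu
    simp only [Set.mem_setOf_eq] at *
    rw [_root_.map_smul]
    filter_upwards [hu, Lp.coeFn_smul c u, Lp.coeFn_smul c (A u)] with x h1 h2 h3
    rw [h3, Pi.smul_apply, h1, h2, Pi.smul_apply, smul_eq_mul, smul_eq_mul]
    ring

lemma gen_mem_S
    (H : ∀ t : ℝ, (∀ f ∈ Nv t, A f ∈ Nv t) ∧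
      (∀ f ∈ Nv t, (ContinuousLinearMap.adjoint A) f ∈ Nv t))
    (s t : ℝ) (hst : s < t) : cut (Ico s t) measurableSet_Ico g ∈ S A := by
  show ⇑(A (cut (Ico s t) measurableSet_Ico g)) =ᵐ[volume] _
  rw [commutes_Ico A H s t hst.le]
  filter_upwards [cut_coe (Ico s t) measurableSet_Ico (A g),
    cut_coe (Ico s t) measurableSet_Ico g, phi_spec A, g_coe] with x h1 h2 h3 h4
  rw [h1, h2]
  by_cases hx : x ∈ Ico s t
  · rw [indicator_of_mem hx, indicator_of_mem hx, h4, ← h3]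
  · rw [indicator_of_notMem hx, indicator_of_notMem hx, mul_zero]

lemma acts_as_mul
    (H : ∀ t : ℝ, (∀ f ∈ Nv t, A f ∈ Nv t) ∧
      (∀ f ∈ Nv t, (ContinuousLinearMap.adjoint A) f ∈ Nv t))
    (f : L2) : ⇑(A f) =ᵐ[volume] fun x => phi A x * f x := by
  obtain ⟨u, huV, hulim⟩ := dense_gens f
  have huS : ∀ n, ⇑(A (u n)) =ᵐ[volume] fun x => phi A x * (u n) x := by
    intro n
    have : u n ∈ S A := by
      refine Submodule.span_le.mpr ?_ (huV n)
      rintro v ⟨s, t, hst, rfl⟩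
      exact gen_mem_S A H s t hst
    exact this
  have h1 : TendstoInMeasure volume (fun n => ⇑(u n)) atTop ⇑f :=
    tendstoInMeasure_of_tendsto_Lp hulim
  obtain ⟨ns, hns, hae1⟩ := h1.exists_seq_tendsto_ae
  have hA : Tendsto (fun n => A (u (ns n))) atTop (nhds (A f)) :=
    (A.continuous.tendsto f).comp (hulim.comp hns.tendsto_atTop)
  have h2 : TendstoInMeasure volume (fun n => ⇑(A (u (ns n)))) atTop ⇑(A f) :=
    tendstoInMeasure_of_tendsto_Lp hA
  obtain ⟨ms, hms, hae2⟩ := h2.exists_seq_tendsto_ae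
  have hall : ∀ᵐ x ∂(volume : Measure ℝ), ∀ n, (A (u n)) x = phi A x * (u n) x :=
    ae_all_iff.mpr huS
  filter_upwards [hae1, hae2, hall] with x hx1 hx2 hx3
  have l1 : Tendsto (fun i => phi A x * (u (ns (ms i))) x) atTop (nhds (phi A x * f x)) :=
    (hx1.comp hms.tendsto_atTop).const_mul _
  have l2 : Tendsto (fun i => phi A x * (u (ns (ms i))) x) atTop (nhds ((A f) x)) :=
    hx2.congr (fun i => hx3 _)
  exact tendsto_nhds_unique l2 l1

lemma norm_bound (A : L2 →L[ℂ] L2) (φ : ℝ → ℂ) (hφ : StronglyMeasurable φ)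
    (hall : ∀ f : L2, ⇑(A f) =ᵐ[volume] fun x => φ x * f x) :
    ∀ᵐ x : ℝ ∂volume, ‖φ x‖ ≤ ‖A‖ := by
  by_contra hcon
  -- the bad set has positive measure
  set T : ℕ → Set ℝ := fun n => {x | ‖A‖ + 1/(n+1) ≤ ‖φ x‖} ∩ Icc (-(n:ℝ)) n with hT
  have hTm : ∀ n, MeasurableSet (T n) := fun n =>
    (measurableSet_le measurable_const hφ.measurable.norm).inter measurableSet_Icc
  have hbad : volume {x : ℝ | ¬ ‖φ x‖ ≤ ‖A‖} ≠ 0 := by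
    intro h0
    exact hcon (ae_iff.mpr h0)
  have hsub : {x : ℝ | ¬ ‖φ x‖ ≤ ‖A‖} ⊆ ⋃ n, T n := by
    intro x hx
    simp only [Set.mem_setOf_eq, not_le] at hx
    obtain ⟨n1, hn1⟩ := exists_nat_one_div_lt (sub_pos.mpr hx)
    obtain ⟨n2, hn2⟩ := exists_nat_gt |x|
    refine Set.mem_iUnion.mpr ⟨max n1 n2, ⟨?_, ?_⟩⟩
    · have : 1/((max n1 n2 : ℕ) + 1 : ℝ) ≤ 1/(n1 + 1 : ℝ) := by
        apply one_div_le_one_div_of_le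
        · positivity
        · have : (n1 : ℝ) ≤ (max n1 n2 : ℕ) := by exact_mod_cast le_max_left n1 n2
          linarith
      simp only [Set.mem_setOf_eq]
      linarith
    · have hx2 : |x| ≤ (max n1 n2 : ℕ) := by
        have : (n2 : ℝ) ≤ (max n1 n2 : ℕ) := by exact_mod_cast le_max_right n1 n2
        linarith
      exact abs_le.mp hx2
  have : ∃ n, volume (T n) ≠ 0 := by
    by_contra hall0
    push_neg at hall0
    exact hbad (measure_mono_null hsub (measure_iUnion_null hall0))
  obtain ⟨n, hn0⟩ := this
  have hfin : volume (T n) ≠ ⊤ := by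
    refine (lt_of_le_of_lt (measure_mono (Set.inter_subset_right)) ?_).ne
    exact measure_Icc_lt_top
  set c : ℝ := ‖A‖ + 1/(n+1) with hc
  have hcpos : 0 < c := by
    have := norm_nonneg A
    have : (0:ℝ) < 1/(n+1) := by positivity
    positivity
  set f₀ : L2 := indicatorConstLp 2 (hTm n) hfin (1:ℂ) with hf₀
  have hnorm : ‖f₀‖ = ((volume (T n)).toReal) ^ ((1:ℝ)/2) := by
    rw [hf₀, norm_indicatorConstLp (by norm_num) (by norm_num)]
    simp [ENNReal.toReal_ofNat, measureReal_def]
  set m : ℝ := ((volume (T n)).toReal) ^ ((1:ℝ)/2) with hm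
  have hmpos : 0 < m := by
    apply Real.rpow_pos_of_pos
    exact ENNReal.toReal_pos hn0 hfin
  have hupper : ‖A f₀‖ ≤ ‖A‖ * m := by
    calc ‖A f₀‖ ≤ ‖A‖ * ‖f₀‖ := A.le_opNorm f₀
    _ = ‖A‖ * m := by rw [hnorm]
  have hlower : c * m ≤ ‖A f₀‖ := by
    have hcoe : ⇑(A f₀) =ᵐ[volume] (T n).indicator φ := by
      filter_upwards [hall f₀, indicatorConstLp_coeFn (p := 2) (hs := hTm n)
        (hμs := hfin) (c := (1:ℂ))] with x h1 h2
      rw [h1, h2]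
      by_cases hx : x ∈ T n
      · rw [indicator_of_mem hx, indicator_of_mem hx, mul_one]
      · rw [indicator_of_notMem hx, indicator_of_notMem hx, mul_zero]
    have hmono : eLpNorm ((T n).indicator (fun _ => (c:ℂ))) 2 volume
        ≤ eLpNorm ((T n).indicator φ) 2 volume := by
      apply eLpNorm_mono_ae
      apply Eventually.of_forall
      intro x
      by_cases hx : x ∈ T n
      · rw [indicator_of_mem hx, indicator_of_mem hx]
        have : c ≤ ‖φ x‖ := hx.1
        calc ‖(c:ℂ)‖ = c := by rw [Complex.norm_real, Real.norm_eq_abs, abs_of_pos hcpos]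
        _ ≤ ‖φ x‖ := this
      · rw [indicator_of_notMem hx, indicator_of_notMem hx]
    have hconst : eLpNorm ((T n).indicator (fun _ => (c:ℂ))) 2 volume
        = ‖(c:ℂ)‖₊ * (volume (T n)) ^ ((1:ℝ)/2) := by
      rw [eLpNorm_indicator_const (hTm n) (by norm_num) (by norm_num)]
      norm_num
      rw [enorm_eq_nnnorm, Complex.nnnorm_real]
    have hfin2 : eLpNorm ((T n).indicator φ) 2 volume ≠ ⊤ := by
      rw [← eLpNorm_congr_ae hcoe]
      exact Lp.eLpNorm_ne_top (A f₀)
    have := ENNReal.toReal_mono hfin2 (hconst ▸ hmono)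
    rw [Lp.norm_def, eLpNorm_congr_ae hcoe]
    refine le_trans (le_of_eq ?_) this
    rw [ENNReal.toReal_mul, ← ENNReal.toReal_rpow]
    congr 1
    rw [ENNReal.coe_toReal, coe_nnnorm, Complex.norm_real, Real.norm_eq_abs, abs_of_pos hcpos]
  have : c ≤ ‖A‖ := by
    have := hlower.trans hupper
    exact le_of_mul_le_mul_right (by linarith) hmpos
  rw [hc] at this
  have : (0:ℝ) < 1/(n+1) := by positivity
  linarith
lemma backward (A : L2 →L[ℂ] L2) (φ : ℝ → ℂ) (hφm : AEStronglyMeasurable φ volume)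
    (C : ℝ) (hC : ∀ᵐ x : ℝ ∂volume, ‖φ x‖ ≤ C)
    (hall : ∀ f : L2, ⇑(A f) =ᵐ[volume] fun x => φ x * f x) :
    ∀ t : ℝ, (∀ f ∈ Nv t, A f ∈ Nv t) ∧
      (∀ f ∈ Nv t, (ContinuousLinearMap.adjoint A) f ∈ Nv t) := by
  set C' : ℝ := max C 0 with hC'
  have hC2 : ∀ᵐ x : ℝ ∂volume, ‖φ x‖ ≤ C' := by
    filter_upwards [hC] with x hx
    exact hx.trans (le_max_left _ _)
  have hconj : AEStronglyMeasurable (fun x => (starRingEnd ℂ) (φ x)) volume :=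
    Complex.continuous_conj.comp_aestronglyMeasurable hφm
  have hmem : ∀ f : L2, MemLp (fun x => (starRingEnd ℂ) (φ x) * f x) 2 volume := by
    intro f
    apply MemLp.of_le ((Lp.memLp f).const_smul (C' : ℂ))
      (hconj.mul (Lp.aestronglyMeasurable f))
    filter_upwards [hC2] with x hx
    rw [Pi.mul_apply, Pi.smul_apply, norm_smul, norm_mul, RCLike.norm_conj]
    apply mul_le_mul_of_nonneg_right _ (norm_nonneg _)
    calc ‖φ x‖ ≤ C' := hx
    _ = ‖(C' : ℂ)‖ := by rw [Complex.norm_real, Real.norm_eq_abs, _root_.abs_of_nonneg (le_max_right C 0)]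
  have hadj : ∀ f : L2, ⇑((adjoint A) f) =ᵐ[volume] fun x => (starRingEnd ℂ) (φ x) * f x := by
    intro f
    have heq : (adjoint A) f = (hmem f).toLp _ := by
      apply ext_inner_right ℂ
      intro v
      rw [adjoint_inner_left]
      rw [MeasureTheory.L2.inner_def, MeasureTheory.L2.inner_def]
      apply integral_congr_ae
      filter_upwards [hall v, MemLp.coeFn_toLp (hmem f)] with x h1 h2
      simp only [RCLike.inner_apply, h1, h2, map_mul, RingHomCompTriple.comp_apply,
        RingHom.id_apply, starRingEnd_self_apply]
      ring
    rw [heq]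
    exact MemLp.coeFn_toLp (hmem f)
  intro t
  constructor
  · intro f hf
    show ∀ᵐ x : ℝ ∂volume, x < t → (A f) x = 0
    filter_upwards [hall f, hf] with x h1 h2 hx
    rw [h1, h2 hx, mul_zero]
  · intro f hf
    show ∀ᵐ x : ℝ ∂volume, x < t → ((adjoint A) f) x = 0
    filter_upwards [hadj f, hf] with x h1 h2 hx
    rw [h1, h2 hx, mul_zero]

end Volterra

/-- An operator `A` on `L²(ℝ)` lies in the diagonal `Alg(N_v) ∩ Alg(N_v)*` of the Volterra
nest algebra if and only if `A = M_φ` for some `φ ∈ L^∞(ℝ)`. -/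
theorem volterra_diagonal_is_multiplication (A : L2 →L[ℂ] L2) :
    (∀ t : ℝ, (∀ f ∈ Nv t, A f ∈ Nv t) ∧
      (∀ f ∈ Nv t, (ContinuousLinearMap.adjoint A) f ∈ Nv t)) ↔
    ∃ φ : ℝ → ℂ, AEStronglyMeasurable φ volume ∧ (∃ C : ℝ, ∀ᵐ x : ℝ ∂volume, ‖φ x‖ ≤ C) ∧
      ∀ f : L2, ⇑(A f) =ᵐ[volume] fun x : ℝ => φ x * f x := by
  constructor
  · intro H
    exact ⟨Volterra.phi A, (Volterra.phi_sm A).aestronglyMeasurable,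
      ⟨‖A‖, Volterra.norm_bound A _ (Volterra.phi_sm A) (Volterra.acts_as_mul A H)⟩,
      Volterra.acts_as_mul A H⟩
  · rintro ⟨φ, hφm, ⟨C, hC⟩, hall⟩
    exact Volterra.backward A φ hφm C hC hall
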